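/- Let X be a compact Hausdorff space, ν a capacity on X, λ ∈ [0,1], and φ ∈ C(X,I). Define υ(φ) = sup{ν(φ^{-1}([s,1])) · s : s ∈ (0,1]}. Then υ(λ·φ) = λ·υ(φ). -/

import Mathlib

open Set TopologicalSpace

/-- An upper-semicontinuous capacity on a topological space `X`:
a monotone set function on closed sets with values in `[0,1]`,
`ν ∅ = 0`, `ν X = 1`, and upper semicontinuity. -/
structure Capacity (X : Type*) [TopologicalSpace X] where
  toFun : Set X → ℝ
  nonneg : ∀ A : Set X, 0 ≤ toFun A
  le_one : ∀ A : Set X, toFun A ≤ 1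
  empty' : toFun ∅ = 0
  univ' : toFun Set.univ = 1
  mono : ∀ ⦃A B : Set X⦄, IsClosed A → IsClosed B → A ⊆ B → toFun A ≤ toFun B
  usc : ∀ ⦃F : Set X⦄ ⦃a : ℝ⦄, IsClosed F → toFun F < a →
    ∃ U : Set X, IsOpen U ∧ F ⊆ U ∧ ∀ ⦃K : Set X⦄, IsCompact K → K ⊆ U → toFun K < a

/-- `ν` is a possibility capacity: `ν (A ∪ B) = max (ν A) (ν B)` for closed `A`, `B`. -/
def IsPossibility {X : Type*} [TopologicalSpace X] (ν : Capacity X) : Prop :=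
  ∀ ⦃A B : Set X⦄, IsClosed A → IsClosed B →
    ν.toFun (A ∪ B) = max (ν.toFun A) (ν.toFun B)


/-- The max-product fuzzy integral of a [0,1]-valued function against a capacity. -/
noncomputable def ups {X : Type*} [TopologicalSpace X] (f : Capacity X) (φ : X → ℝ) : ℝ :=
  sSup ((fun s => f.toFun {x : X | s ≤ φ x} * s) '' Set.Ioc (0:ℝ) 1)

/-- Homogeneity: υ(λ·φ) = λ·υ(φ). -/
theorem stmt11 {X : Type*} [TopologicalSpace X] [CompactSpace X] [T2Space X]
    (ν : Capacity X) (l : ℝ) (hl : l ∈ Set.Icc (0:ℝ) 1)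
    (φ : X → ℝ) (hφc : Continuous φ) (hφ : ∀ x, φ x ∈ Set.Icc (0:ℝ) 1) :
    ups ν (fun x => l * φ x) = l * ups ν φ := by
  obtain ⟨hl0, hl1⟩ := hl
  rcases eq_or_lt_of_le hl0 with h0 | h0
  · -- l = 0
    subst h0
    simp only [zero_mul]
    unfold ups
    have himg : ((fun s => ν.toFun {x : X | s ≤ (fun _ : X => (0:ℝ)) x} * s) ''
        Set.Ioc (0:ℝ) 1) = {0} := by
      ext y
      simp only [Set.mem_image, Set.mem_Ioc, Set.mem_singleton_iff]
      constructor
      · rintro ⟨s, ⟨hs0, hs1⟩, rfl⟩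
        have hset : {x : X | s ≤ (fun _ : X => (0:ℝ)) x} = ∅ := by
          ext x; simp [not_le.mpr hs0]
        simp [hset, ν.empty']
      · rintro rfl
        refine ⟨1, ⟨one_pos, le_refl 1⟩, ?_⟩
        have hset : {x : X | (1:ℝ) ≤ (fun _ : X => (0:ℝ)) x} = ∅ := by
          ext x; simp
        simp [hset, ν.empty']
    simp only [zero_mul]
    rw [himg, csSup_singleton]
  · -- 0 < l
    unfold ups
    set A := ((fun s => ν.toFun {x : X | s ≤ (fun x => l * φ x) x} * s) '' Set.Ioc (0:ℝ) 1)
      with hA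
    set B := ((fun s => ν.toFun {x : X | s ≤ φ x} * s) '' Set.Ioc (0:ℝ) 1) with hB
    have hA_bdd : BddAbove A := by
      refine ⟨1, ?_⟩
      rintro y ⟨s, hs, rfl⟩
      exact mul_le_one₀ (ν.le_one _) hs.1.le hs.2
    have hB_bdd : BddAbove B := by
      refine ⟨1, ?_⟩
      rintro y ⟨s, hs, rfl⟩
      exact mul_le_one₀ (ν.le_one _) hs.1.le hs.2
    have hB_mem : ν.toFun {x : X | (1:ℝ) ≤ φ x} * 1 ∈ B :=
      ⟨1, ⟨one_pos, le_refl 1⟩, rfl⟩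
    have hA_mem : ν.toFun {x : X | (1:ℝ) ≤ (fun x => l * φ x) x} * 1 ∈ A :=
      ⟨1, ⟨one_pos, le_refl 1⟩, rfl⟩
    have hSupB_nonneg : 0 ≤ sSup B := by
      have h1 : 0 ≤ ν.toFun {x : X | (1:ℝ) ≤ φ x} * 1 := by
        have := ν.nonneg {x : X | (1:ℝ) ≤ φ x}; linarith
      exact le_trans h1 (le_csSup hB_bdd hB_mem)
    have hSupA_nonneg : 0 ≤ sSup A := by
      have h1 : 0 ≤ ν.toFun {x : X | (1:ℝ) ≤ (fun x => l * φ x) x} * 1 := by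
        have := ν.nonneg {x : X | (1:ℝ) ≤ (fun x => l * φ x) x}; linarith
      exact le_trans h1 (le_csSup hA_bdd hA_mem)
    apply le_antisymm
    · apply Real.sSup_le
      · rintro y ⟨s, hs, rfl⟩
        dsimp only
        by_cases hsl : s ≤ l
        · have hset : {x : X | s ≤ (fun x => l * φ x) x} = {x : X | s / l ≤ φ x} := by
            ext x
            simp only [Set.mem_setOf_eq]
            rw [div_le_iff₀ h0, mul_comm]
          have hmem : ν.toFun {x : X | s / l ≤ φ x} * (s / l) ∈ B :=
            ⟨s / l, ⟨div_pos hs.1 h0, (div_le_one h0).mpr hsl⟩, rfl⟩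
          have hle := le_csSup hB_bdd hmem
          have heq : ν.toFun {x : X | s ≤ (fun x => l * φ x) x} * s
              = l * (ν.toFun {x : X | s / l ≤ φ x} * (s / l)) := by
            rw [hset]; field_simp
          rw [heq]
          exact mul_le_mul_of_nonneg_left hle hl0
        · have hset : {x : X | s ≤ (fun x => l * φ x) x} = ∅ := by
            ext x
            simp only [Set.mem_setOf_eq, Set.mem_empty_iff_false, iff_false, not_le]
            have h1 : l * φ x ≤ l * 1 := mul_le_mul_of_nonneg_left (hφ x).2 hl0
            have h2 : l < s := lt_of_not_ge hsl
            linarith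
          rw [hset, ν.empty', zero_mul]
          exact mul_nonneg hl0 hSupB_nonneg
      · exact mul_nonneg hl0 hSupB_nonneg
    · rw [mul_comm, ← le_div_iff₀ h0]
      apply Real.sSup_le
      · rintro y ⟨t, ht, rfl⟩
        dsimp only
        rw [le_div_iff₀ h0]
        have hmem : ν.toFun {x : X | l * t ≤ (fun x => l * φ x) x} * (l * t) ∈ A := by
          refine ⟨l * t, ⟨mul_pos h0 ht.1, ?_⟩, rfl⟩
          calc l * t ≤ l * 1 := mul_le_mul_of_nonneg_left ht.2 hl0
            _ = l := mul_one l
            _ ≤ 1 := hl1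
        have hset : {x : X | l * t ≤ (fun x => l * φ x) x} = {x : X | t ≤ φ x} := by
          ext x
          simp only [Set.mem_setOf_eq]
          exact mul_le_mul_iff_of_pos_left h0
        have hle := le_csSup hA_bdd hmem
        rw [hset] at hle
        calc ν.toFun {x : X | t ≤ φ x} * t * l
            = ν.toFun {x : X | t ≤ φ x} * (l * t) := by ring
          _ ≤ sSup A := hle
      · exact div_nonneg hSupA_nonneg hl0
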